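/- Let Γ be a finite connected graph embedded in the sphere S² consisting (after suppressing 2-valent vertices) of exactly three 3-valent vertices, three 1-valent vertices, and 6 edges, such that S² \ Γ has exactly two faces. Then the pair of face degrees (counting edge-incidences, with an edge counted twice if the same face lies on both sides) belongs to {(1,11),(4,8),(5,7),(3,9),(2,10)}; in particular it is never (6,6). -/

import Mathlib

/-- The orbit (cycle) of a point under the cyclic group generated by a permutation. -/
def permOrbit {α : Type*} (f : Equiv.Perm α) (x : α) : Set α :=
  {y | ∃ n : ℤ, (f ^ n) x = y}

namespace Stmt17

def S0 : ℕ := 0xba9687354021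
def dig (t n : ℕ) : ℕ := t / 16 ^ n % 16
def pairs : ℕ → List ℕ → List (List (ℕ × ℕ))
  | _, [] => [[]]
  | 0, _ :: _ => []
  | fuel + 1, x :: xs => xs.flatMap fun y => (pairs fuel (xs.erase y)).map ((x, y) :: ·)
def encode (p : List (ℕ × ℕ)) : ℕ := p.foldl (fun t q => t + q.2 * 16 ^ q.1 + q.1 * 16 ^ q.2) 0
def setBit (m j : ℕ) : ℕ := m + (1 - m / 2 ^ j % 2) * 2 ^ j
def idx : List ℕ := [0,1,2,3,4,5,6,7,8,9,10,11]
def stepN (A m : ℕ) : ℕ :=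
  idx.foldl (fun acc n => if acc / 2 ^ n % 2 == 1 then setBit (setBit acc (dig S0 n)) (dig A n) else acc) m
def phiIt (A : ℕ) : ℕ → ℕ → ℕ
  | 0, n => n
  | k + 1, n => phiIt A k (dig S0 (dig A n))
def certB (A : ℕ) : List (ℕ × ℕ) → Bool
  | [] => true
  | (a, b) :: q => dig A a == b && dig A b == a && certB A q
def guardB (A : ℕ) : Bool :=
  idx.all fun n => phiIt A 6 n == n && !(phiIt A 2 n == n) && !(phiIt A 3 n == n)
def Rmask (A : ℕ) : ℕ := stepN A (stepN A (stepN A (stepN A 1)))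
def satB (A : ℕ) : Bool :=
  (Rmask A % 2 == 1) &&
  (idx.all fun n => !(Rmask A / 2 ^ n % 2 == 1) ||
     ((Rmask A / 2 ^ (dig S0 n) % 2 == 1) && (Rmask A / 2 ^ (dig A n) % 2 == 1))) &&
  !(idx.all fun n => Rmask A / 2 ^ n % 2 == 1)
def check (p : List (ℕ × ℕ)) : Bool :=
  certB (encode p) p && (!guardB (encode p) || satB (encode p))

set_option maxRecDepth 1000000 in
set_option maxHeartbeats 4000000 in
theorem core1 : ∀ y2 ∈ [3, 4, 5, 6, 7, 8, 9, 10, 11], ∀ p ∈ pairs 10 ([3, 4, 5, 6, 7, 8, 9, 10, 11].erase y2),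
    check ((0, 1) :: (2, y2) :: p) = true := by decide +kernel
set_option maxRecDepth 1000000 in
set_option maxHeartbeats 4000000 in
theorem core2 : ∀ y2 ∈ [3, 4, 5, 6, 7, 8, 9, 10, 11], ∀ p ∈ pairs 10 ([3, 4, 5, 6, 7, 8, 9, 10, 11].erase y2),
    check ((0, 2) :: (1, y2) :: p) = true := by decide +kernel
set_option maxRecDepth 1000000 in
set_option maxHeartbeats 4000000 in
theorem core3 : ∀ y2 ∈ [2, 4, 5, 6, 7, 8, 9, 10, 11], ∀ p ∈ pairs 10 ([2, 4, 5, 6, 7, 8, 9, 10, 11].erase y2),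
    check ((0, 3) :: (1, y2) :: p) = true := by decide +kernel
set_option maxRecDepth 1000000 in
set_option maxHeartbeats 4000000 in
theorem core4 : ∀ y2 ∈ [2, 3, 5, 6, 7, 8, 9, 10, 11], ∀ p ∈ pairs 10 ([2, 3, 5, 6, 7, 8, 9, 10, 11].erase y2),
    check ((0, 4) :: (1, y2) :: p) = true := by decide +kernel
set_option maxRecDepth 1000000 in
set_option maxHeartbeats 4000000 in
theorem core5 : ∀ y2 ∈ [2, 3, 4, 6, 7, 8, 9, 10, 11], ∀ p ∈ pairs 10 ([2, 3, 4, 6, 7, 8, 9, 10, 11].erase y2),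
    check ((0, 5) :: (1, y2) :: p) = true := by decide +kernel
set_option maxRecDepth 1000000 in
set_option maxHeartbeats 4000000 in
theorem core6 : ∀ y2 ∈ [2, 3, 4, 5, 7, 8, 9, 10, 11], ∀ p ∈ pairs 10 ([2, 3, 4, 5, 7, 8, 9, 10, 11].erase y2),
    check ((0, 6) :: (1, y2) :: p) = true := by decide +kernel
set_option maxRecDepth 1000000 in
set_option maxHeartbeats 4000000 in
theorem core7 : ∀ y2 ∈ [2, 3, 4, 5, 6, 8, 9, 10, 11], ∀ p ∈ pairs 10 ([2, 3, 4, 5, 6, 8, 9, 10, 11].erase y2),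
    check ((0, 7) :: (1, y2) :: p) = true := by decide +kernel
set_option maxRecDepth 1000000 in
set_option maxHeartbeats 4000000 in
theorem core8 : ∀ y2 ∈ [2, 3, 4, 5, 6, 7, 9, 10, 11], ∀ p ∈ pairs 10 ([2, 3, 4, 5, 6, 7, 9, 10, 11].erase y2),
    check ((0, 8) :: (1, y2) :: p) = true := by decide +kernel
set_option maxRecDepth 1000000 in
set_option maxHeartbeats 4000000 in
theorem core9 : ∀ y2 ∈ [2, 3, 4, 5, 6, 7, 8, 10, 11], ∀ p ∈ pairs 10 ([2, 3, 4, 5, 6, 7, 8, 10, 11].erase y2),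
    check ((0, 9) :: (1, y2) :: p) = true := by decide +kernel
set_option maxRecDepth 1000000 in
set_option maxHeartbeats 4000000 in
theorem core10 : ∀ y2 ∈ [2, 3, 4, 5, 6, 7, 8, 9, 11], ∀ p ∈ pairs 10 ([2, 3, 4, 5, 6, 7, 8, 9, 11].erase y2),
    check ((0, 10) :: (1, y2) :: p) = true := by decide +kernel
set_option maxRecDepth 1000000 in
set_option maxHeartbeats 4000000 in
theorem core11 : ∀ y2 ∈ [2, 3, 4, 5, 6, 7, 8, 9, 10], ∀ p ∈ pairs 10 ([2, 3, 4, 5, 6, 7, 8, 9, 10].erase y2),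
    check ((0, 11) :: (1, y2) :: p) = true := by decide +kernel

theorem coreAll : ∀ p ∈ pairs 12 (List.range 12), check p = true := by
  intro p hp
  rw [show (List.range 12) = 0 :: [1,2,3,4,5,6,7,8,9,10,11] by rfl] at hp
  simp only [pairs, List.mem_flatMap, List.mem_map] at hp
  obtain ⟨y1, hy1, q, hq, rfl⟩ := hp
  simp only [List.mem_cons, List.not_mem_nil, or_false] at hy1
  rcases hy1 with rfl|rfl|rfl|rfl|rfl|rfl|rfl|rfl|rfl|rfl|rfl <;>
  · simp only [List.erase_cons, List.erase_nil, beq_iff_eq, Nat.reduceEqDiff, if_true, if_false] at hq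
    rw [pairs.eq_3] at hq
    simp only [List.mem_flatMap, List.mem_map] at hq
    obtain ⟨y2, hy2, r, hr, rfl⟩ := hq
    first
    | exact core1 y2 hy2 r hr | exact core2 y2 hy2 r hr | exact core3 y2 hy2 r hr
    | exact core4 y2 hy2 r hr | exact core5 y2 hy2 r hr | exact core6 y2 hy2 r hr
    | exact core7 y2 hy2 r hr | exact core8 y2 hy2 r hr | exact core9 y2 hy2 r hr
    | exact core10 y2 hy2 r hr | exact core11 y2 hy2 r hr

/-- Completeness of the pairing enumeration. -/
theorem pairs_complete : ∀ (fuel : ℕ) (l : List ℕ), l.length ≤ fuel → l.Nodup →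
    ∀ a : ℕ → ℕ, (∀ x ∈ l, a x ∈ l ∧ a (a x) = x ∧ a x ≠ x) →
    ∃ p ∈ pairs fuel l,
      (∀ q ∈ p, a q.1 = q.2 ∧ a q.2 = q.1) ∧ (∀ x ∈ l, ∃ q ∈ p, x = q.1 ∨ x = q.2) := by
  intro fuel
  induction fuel with
  | zero =>
    intro l hl _ a _
    have : l = [] := List.length_eq_zero_iff.1 (Nat.le_zero.1 hl)
    subst this
    exact ⟨[], by simp [pairs], by simp, by simp⟩
  | succ f ih =>
    intro l hl hnd a ha
    match l with
    | [] => exact ⟨[], by simp [pairs], by simp, by simp⟩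
    | x :: xs =>
      obtain ⟨hax, haax, hne⟩ := ha x (by simp)
      have hy : a x ∈ xs := by
        rcases List.mem_cons.1 hax with h | h
        · exact (hne h).elim
        · exact h
      have hndxs : xs.Nodup := (List.nodup_cons.1 hnd).2
      have hxnot : x ∉ xs := (List.nodup_cons.1 hnd).1
      have hrest_nd : (xs.erase (a x)).Nodup := hndxs.erase (a x)
      have hlen : (xs.erase (a x)).length ≤ f := by
        have h1 := List.length_erase_of_mem hy
        have hxl : xs.length ≤ f := by simpa using hl
        omega
      have hcond : ∀ z ∈ xs.erase (a x), a z ∈ xs.erase (a x) ∧ a (a z) = z ∧ a z ≠ z := by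
        intro z hz
        have hzy : z ≠ a x ∧ z ∈ xs := hndxs.mem_erase_iff.1 hz
        obtain ⟨h1, h2, h3⟩ := ha z (List.mem_cons_of_mem _ hzy.2)
        have haz_ne_x : a z ≠ x := by
          intro h
          exact hzy.1 (by rw [← h2, h])
        have haz_xs : a z ∈ xs := by
          rcases List.mem_cons.1 h1 with h | h
          · exact (haz_ne_x h).elim
          · exact h
        have haz_ne_y : a z ≠ a x := by
          intro h
          have hzx : z = x := by rw [← h2, h, haax]
          exact hxnot (hzx ▸ hzy.2)
        exact ⟨hndxs.mem_erase_iff.2 ⟨haz_ne_y, haz_xs⟩, h2, h3⟩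
      obtain ⟨p', hp'mem, hp'1, hp'2⟩ := ih (xs.erase (a x)) hlen hrest_nd a hcond
      refine ⟨(x, a x) :: p', ?_, ?_, ?_⟩
      · show (x, a x) :: p' ∈ pairs (f + 1) (x :: xs)
        simp only [pairs, List.mem_flatMap, List.mem_map]
        exact ⟨a x, hy, p', hp'mem, rfl⟩
      · intro q hq
        rcases List.mem_cons.1 hq with rfl | hq'
        · exact ⟨rfl, haax⟩
        · exact hp'1 q hq'
      · intro z hz
        rcases List.mem_cons.1 hz with rfl | hz'
        · exact ⟨(z, a z), List.mem_cons_self, Or.inl rfl⟩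
        · by_cases hzy : z = a x
          · exact ⟨(x, a x), List.mem_cons_self, Or.inr hzy⟩
          · obtain ⟨q, hq1, hq2⟩ := hp'2 z (hndxs.mem_erase_iff.2 ⟨hzy, hz'⟩)
            exact ⟨q, List.mem_cons_of_mem _ hq1, hq2⟩

def c1 : Equiv.Perm (Fin 12) := ([0, 1, 2] : List (Fin 12)).formPerm
def c2 : Equiv.Perm (Fin 12) := ([3, 4, 5] : List (Fin 12)).formPerm
def c3 : Equiv.Perm (Fin 12) := ([6, 7, 8] : List (Fin 12)).formPerm
def sig0 : Equiv.Perm (Fin 12) := c1 * (c2 * c3)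

theorem isCycle_c1 : c1.IsCycle := List.isCycle_formPerm (by decide) (by decide)
theorem isCycle_c2 : c2.IsCycle := List.isCycle_formPerm (by decide) (by decide)
theorem isCycle_c3 : c3.IsCycle := List.isCycle_formPerm (by decide) (by decide)

theorem disj12 : c1.Disjoint c2 := by
  have h : ∀ x : Fin 12, c1 x = x ∨ c2 x = x := by decide
  exact h
theorem disj13 : c1.Disjoint c3 := by
  have h : ∀ x : Fin 12, c1 x = x ∨ c3 x = x := by decide
  exact h
theorem disj23 : c2.Disjoint c3 := by
  have h : ∀ x : Fin 12, c2 x = x ∨ c3 x = x := by decide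
  exact h

theorem supc1 : c1.support.card = 3 := by decide
theorem supc2 : c2.support.card = 3 := by decide
theorem supc3 : c3.support.card = 3 := by decide

theorem cycleType_sig0 : sig0.cycleType = {3, 3, 3} := by
  rw [sig0, Equiv.Perm.Disjoint.cycleType_mul (disj12.mul_right disj13),
    Equiv.Perm.Disjoint.cycleType_mul disj23, isCycle_c1.cycleType, isCycle_c2.cycleType,
    isCycle_c3.cycleType, supc1, supc2, supc3]
  rfl

theorem hSdig : ∀ w : Fin 12, dig S0 w.val = (sig0 w).val := by decide
theorem hvalidx : ∀ w : Fin 12, (w.val) ∈ idx := by decide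
theorem hidxlt : ∀ n ∈ idx, n < 12 := by decide

theorem permOrbit_eq_sameCycle {α : Type*} (f : Equiv.Perm α) (v : α) :
    permOrbit f v = {w | f.SameCycle v w} := rfl

theorem permOrbit_eq_of_mem {α : Type*} {f : Equiv.Perm α} {v w : α}
    (h : w ∈ permOrbit f v) : permOrbit f v = permOrbit f w := by
  have hvw : f.SameCycle v w := h
  ext u
  exact ⟨fun hu => hvw.symm.trans hu, fun hu => hvw.trans hu⟩

theorem zpow_apply_eq_self {α : Type*} {f : Equiv.Perm α} {z : α} (h : f z = z) :
    ∀ n : ℤ, (f ^ n) z = z := by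
  intro n
  induction n using Int.induction_on with
  | zero => simp
  | succ k ih => rw [zpow_add_one, Equiv.Perm.mul_apply, h, ih]
  | pred k ih =>
    rw [zpow_sub_one, Equiv.Perm.mul_apply, show f⁻¹ z = z by
      conv_lhs => rw [← h]
      exact f.symm_apply_apply z, ih]

theorem period_of_ncard6 (f : Equiv.Perm (Fin 12)) (z : Fin 12)
    (h : (permOrbit f z).ncard = 6) :
    (f ^ 6) z = z ∧ (f ^ 2) z ≠ z ∧ (f ^ 3) z ≠ z := by
  classical
  have hfz : f z ≠ z := by
    intro hz
    have : permOrbit f z = {z} := by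
      ext w
      constructor
      · rintro ⟨n, rfl⟩
        simp [zpow_apply_eq_self hz n]
      · rintro rfl
        exact ⟨0, by simp⟩
    rw [this] at h
    simp at h
  have hzsupp : z ∈ f.support := Equiv.Perm.mem_support.2 hfz
  have hset : permOrbit f z = ↑(f.cycleOf z).support := by
    ext w
    rw [Finset.mem_coe, Equiv.Perm.mem_support_cycleOf_iff]
    exact ⟨fun hh => ⟨hh, hzsupp⟩, fun hh => hh.1⟩
  have h6 : (f.cycleOf z).support.card = 6 := by
    rw [hset, Set.ncard_coe_finset] at h
    exact h
  have hc : (f.cycleOf z).IsCycle := f.isCycle_cycleOf hfz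
  have horder : orderOf (f.cycleOf z) = 6 := hc.orderOf.trans h6
  have hcz : f.cycleOf z z ≠ z := by
    rw [Equiv.Perm.cycleOf_apply_self]
    exact hfz
  refine ⟨?_, ?_, ?_⟩
  · rw [← Equiv.Perm.cycleOf_pow_apply_self, ← horder, pow_orderOf_eq_one]
    rfl
  · intro h2
    rw [← Equiv.Perm.cycleOf_pow_apply_self] at h2
    have : f.cycleOf z ^ 2 = 1 := (hc.pow_eq_one_iff' hcz).2 h2
    have := orderOf_dvd_of_pow_eq_one this
    rw [horder] at this
    omega
  · intro h3
    rw [← Equiv.Perm.cycleOf_pow_apply_self] at h3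
    have : f.cycleOf z ^ 3 = 1 := (hc.pow_eq_one_iff' hcz).2 h3
    have := orderOf_dvd_of_pow_eq_one this
    rw [horder] at this
    omega

theorem certB_spec (A : ℕ) : ∀ p : List (ℕ × ℕ), certB A p = true →
    ∀ q ∈ p, dig A q.1 = q.2 ∧ dig A q.2 = q.1 := by
  intro p
  induction p with
  | nil => intro _ q hq; simp at hq
  | cons hd t ih =>
    intro h q hq
    obtain ⟨a, b⟩ := hd
    simp only [certB, Bool.and_eq_true, beq_iff_eq] at h
    rcases List.mem_cons.1 hq with rfl | hq'
    · exact ⟨h.1.1, h.1.2⟩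
    · exact ih h.2 q hq'

theorem conjpow {G : Type*} [Group G] (c g : G) (n : ℕ) :
    (c⁻¹ * g * c) ^ n = c⁻¹ * g ^ n * c := by
  induction n with
  | zero => group
  | succ n ih => rw [pow_succ, pow_succ, ih]; group

theorem stab_iff {g : Equiv.Perm (Fin 12)} {T : Finset (Fin 12)}
    (h : ∀ w ∈ T, g w ∈ T) : ∀ w, w ∈ T ↔ g w ∈ T := by
  have hsub : T.image g ⊆ T := by
    intro u hu
    obtain ⟨v, hv, rfl⟩ := Finset.mem_image.1 hu
    exact h v hv
  have himg : T.image g = T :=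
    Finset.eq_of_subset_of_card_le hsub
      (le_of_eq (Finset.card_image_of_injective T g.injective).symm)
  intro w
  refine ⟨h w, fun hg => ?_⟩
  rw [← himg] at hg
  obtain ⟨u, hu, huw⟩ := Finset.mem_image.1 hg
  rwa [← g.injective huw]

theorem no66 (σ α : Equiv.Perm (Fin 12)) (hσ : σ.cycleType = {3, 3, 3})
    (hα1 : α * α = 1) (hα2 : ∀ x, α x ≠ x)
    (htrans : ∀ x y : Fin 12,
      ∃ g ∈ Subgroup.closure ({σ, α} : Set (Equiv.Perm (Fin 12))), g x = y)
    (hall6 : ∀ z : Fin 12, (permOrbit (σ * α) z).ncard = 6) : False := by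
  classical
  -- conjugate σ to the standard sig0
  have hconj : IsConj sig0 σ :=
    Equiv.Perm.isConj_iff_cycleType_eq.2 (by rw [cycleType_sig0, hσ])
  obtain ⟨c, hc⟩ := isConj_iff.1 hconj
  have hs0 : c⁻¹ * σ * c = sig0 := by
    rw [← hc]; group
  set α' : Equiv.Perm (Fin 12) := c⁻¹ * α * c with hα'def
  have hφ' : sig0 * α' = c⁻¹ * (σ * α) * c := by
    rw [← hs0, hα'def]; group
  have hpow : ∀ (n : ℕ) (w : Fin 12), ((sig0 * α') ^ n) w = c⁻¹ (((σ * α) ^ n) (c w)) := by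
    intro n w
    rw [hφ', conjpow]
    simp [Equiv.Perm.mul_apply]
  have hall' : ∀ w : Fin 12, ((sig0 * α') ^ 6) w = w ∧ ((sig0 * α') ^ 2) w ≠ w ∧ ((sig0 * α') ^ 3) w ≠ w := by
    intro w
    obtain ⟨h6, h2, h3⟩ := period_of_ncard6 (σ * α) (c w) (hall6 (c w))
    refine ⟨by rw [hpow, h6]; simp, fun hh => ?_, fun hh => ?_⟩
    · rw [hpow] at hh
      apply h2
      have := congrArg c hh
      simpa using this
    · rw [hpow] at hh
      apply h3
      have := congrArg c hh
      simpa using this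
  have hα'2 : ∀ w : Fin 12, α' w ≠ w := by
    intro w hh
    apply hα2 (c w)
    have : (c⁻¹ : Equiv.Perm (Fin 12)) (α (c w)) = w := by
      simpa [hα'def, Equiv.Perm.mul_apply] using hh
    have := congrArg c this
    simpa using this
  have hα'1 : α' * α' = 1 := by
    have : α' * α' = c⁻¹ * (α * α) * c := by rw [hα'def]; group
    rw [this, hα1]; group
  -- transitivity for (sig0, α')
  have htrans' : ∀ u v : Fin 12,
      ∃ g ∈ Subgroup.closure ({sig0, α'} : Set (Equiv.Perm (Fin 12))), g u = v := by
    intro u v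
    obtain ⟨g, hg, hgu⟩ := htrans (c u) (c v)
    refine ⟨c⁻¹ * g * c, ?_, ?_⟩
    · refine Subgroup.closure_induction
        (p := fun h _ => c⁻¹ * h * c ∈ Subgroup.closure ({sig0, α'} : Set (Equiv.Perm (Fin 12))))
        ?_ ?_ ?_ ?_ hg
      · intro h hh
        rcases hh with rfl | rfl
        · rw [hs0]; exact Subgroup.subset_closure (Set.mem_insert _ _)
        · exact Subgroup.subset_closure (Set.mem_insert_of_mem _ rfl)
      · show c⁻¹ * 1 * c ∈ Subgroup.closure ({sig0, α'} : Set (Equiv.Perm (Fin 12)))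
        rw [mul_one, inv_mul_cancel]; exact one_mem _
      · intro p q _ _ hhp hhq
        show c⁻¹ * (p * q) * c ∈ _
        have heq : c⁻¹ * (p * q) * c = (c⁻¹ * p * c) * (c⁻¹ * q * c) := by group
        rw [heq]; exact mul_mem hhp hhq
      · intro p _ hhp
        show c⁻¹ * p⁻¹ * c ∈ _
        have heq : c⁻¹ * p⁻¹ * c = (c⁻¹ * p * c)⁻¹ := by group
        rw [heq]; exact inv_mem hhp
    · simp [Equiv.Perm.mul_apply, hgu]
  -- build the ℕ-level involution and get the pairing
  set a : ℕ → ℕ := fun n => if h : n < 12 then (α' ⟨n, h⟩ : Fin 12).val else n with hadef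
  have haw : ∀ w : Fin 12, a w.val = (α' w).val := by
    intro w
    simp [hadef, w.isLt]
  have hacond : ∀ x ∈ List.range 12, a x ∈ List.range 12 ∧ a (a x) = x ∧ a x ≠ x := by
    intro x hx
    have hx12 : x < 12 := List.mem_range.1 hx
    set w : Fin 12 := ⟨x, hx12⟩ with hwdef
    have h1 : a x = (α' w).val := haw w
    refine ⟨by rw [h1]; exact List.mem_range.2 (α' w).isLt, ?_, ?_⟩
    · rw [h1, haw (α' w)]
      have : α' (α' w) = w := by
        have := congrFun (congrArg (fun (e : Equiv.Perm (Fin 12)) => (e : Fin 12 → Fin 12)) hα'1) w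
        simpa [Equiv.Perm.mul_apply] using this
      rw [this]
    · rw [h1]
      intro hh
      exact hα'2 w (Fin.ext hh)
  obtain ⟨p, hpmem, hp1, hp2⟩ :=
    pairs_complete 12 (List.range 12) (by simp) (List.nodup_range (n := 12)) a hacond
  have hchk := coreAll p hpmem
  unfold check at hchk
  rw [Bool.and_eq_true] at hchk
  obtain ⟨hcertb, hrest⟩ := hchk
  have hcert := certB_spec (encode p) p hcertb
  -- digit table agrees with α'
  have hdig : ∀ w : Fin 12, dig (encode p) w.val = (α' w).val := by
    intro w
    have hwmem : w.val ∈ List.range 12 := List.mem_range.2 w.isLt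
    obtain ⟨q, hqp, hqor⟩ := hp2 w.val hwmem
    rcases hqor with h | h
    · rw [h, (hcert q hqp).1, ← (hp1 q hqp).1, ← h, haw]
    · rw [h, (hcert q hqp).2, ← (hp1 q hqp).2, ← h, haw]
  have hphi : ∀ w : Fin 12, dig S0 (dig (encode p) w.val) = ((sig0 * α') w).val := by
    intro w
    rw [hdig w, hSdig (α' w)]
    rfl
  have hphiIt : ∀ (k : ℕ) (w : Fin 12), phiIt (encode p) k w.val = (((sig0 * α') ^ k) w).val := by
    intro k
    induction k with
    | zero => intro w; simp [phiIt]
    | succ k ih =>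
      intro w
      show phiIt (encode p) k (dig S0 (dig (encode p) w.val)) = _
      rw [hphi w, ih ((sig0 * α') w), pow_succ]
      rfl
  -- the guard holds
  have hguard : guardB (encode p) = true := by
    unfold guardB
    rw [List.all_eq_true]
    intro n hn
    have hn12 : n < 12 := hidxlt n hn
    set w : Fin 12 := ⟨n, hn12⟩ with hwdef
    have hnw : n = w.val := rfl
    obtain ⟨h6, h2, h3⟩ := hall' w
    simp only [Bool.and_eq_true, beq_iff_eq, Bool.not_eq_true', beq_eq_false_iff_ne]
    refine ⟨⟨?_, ?_⟩, ?_⟩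
    · rw [hnw, hphiIt 6 w, h6]
    · rw [hnw, hphiIt 2 w]
      intro hh
      exact h2 (Fin.ext hh)
    · rw [hnw, hphiIt 3 w]
      intro hh
      exact h3 (Fin.ext hh)
  rw [hguard] at hrest
  simp only [Bool.not_true, Bool.false_or] at hrest
  -- extract the saturation facts
  unfold satB at hrest
  simp only [Bool.and_eq_true, beq_iff_eq, List.all_eq_true, Bool.not_eq_true',
    Bool.or_eq_true, Bool.not_eq_true] at hrest
  obtain ⟨⟨hR0, hcl⟩, hnf⟩ := hrest
  -- the reachable-set Finset
  set T : Finset (Fin 12) :=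
    Finset.univ.filter (fun w => Rmask (encode p) / 2 ^ (w.val) % 2 = 1) with hTdef
  have hT : ∀ w : Fin 12, w ∈ T ↔ Rmask (encode p) / 2 ^ (w.val) % 2 = 1 := by
    intro w; simp [hTdef]
  have h0T : (0 : Fin 12) ∈ T := by
    rw [hT]
    show Rmask (encode p) / 2 ^ 0 % 2 = 1
    simpa using hR0
  have hfwd_s : ∀ w ∈ T, sig0 w ∈ T := by
    intro w hw
    rw [hT] at hw ⊢
    rcases hcl w.val (hvalidx w) with h | h
    · rw [beq_eq_false_iff_ne] at h; exact (h hw).elim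
    · rw [← hSdig w]
      exact h.1
  have hfwd_a : ∀ w ∈ T, α' w ∈ T := by
    intro w hw
    rw [hT] at hw ⊢
    rcases hcl w.val (hvalidx w) with h | h
    · rw [beq_eq_false_iff_ne] at h; exact (h hw).elim
    · rw [← hdig w]
      exact h.2
  -- every element of the closure stabilizes T
  have hstab : ∀ g ∈ Subgroup.closure ({sig0, α'} : Set (Equiv.Perm (Fin 12))),
      ∀ w : Fin 12, w ∈ T ↔ g w ∈ T := by
    intro g hg
    refine Subgroup.closure_induction
      (p := fun h _ => ∀ w : Fin 12, w ∈ T ↔ h w ∈ T) ?_ ?_ ?_ ?_ hg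
    · intro h hh
      rcases hh with rfl | rfl
      · exact stab_iff hfwd_s
      · exact stab_iff hfwd_a
    · intro w; simp
    · intro g1 g2 _ _ h1 h2 w
      rw [h2 w, h1 (g2 w)]
      rfl
    · intro g1 _ h1 w
      have := h1 (g1⁻¹ w)
      rw [show g1 (g1⁻¹ w) = w from g1.apply_symm_apply w] at this
      exact this.symm
  -- transitivity fills T, contradiction
  have hfull : (idx.all fun n => Rmask (encode p) / 2 ^ n % 2 == 1) = true := by
    rw [List.all_eq_true]
    intro n hn
    rw [beq_iff_eq]
    have hn12 : n < 12 := hidxlt n hn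
    set w : Fin 12 := ⟨n, hn12⟩ with hwdef
    obtain ⟨g, hg, hg0⟩ := htrans' 0 w
    have : w ∈ T := by
      rw [← hg0]
      exact (hstab g hg 0).1 h0T
    rw [hT] at this
    rw [show n = w.val from rfl]
    exact this
  rw [hfull] at hnf
  simp at hnf

end Stmt17

open Stmt17

/-- Combinatorial core of the exceptionality of
`(S², S², 12, 3; ⟦2,2,2,2,2,2⟧, ⟦1,1,1,3,3,3⟧, ⟦6,6⟧)`, phrased via the permutation
model of maps on the sphere: a connected graph with three 3-valent and three 1-valent
vertices and 6 edges (so 12 darts, vertex permutation `σ` of cycle type `{3,3,3}`,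
edge involution `α` fixed-point free) having exactly two faces has face-degree pair
in `{(1,11),(4,8),(5,7),(3,9),(2,10)}`; in particular never `(6,6)`. -/
theorem stmt17 (σ α : Equiv.Perm (Fin 12)) (s : ℕ)
    (hσ : σ.cycleType = {3, 3, 3})
    (hα : α * α = 1 ∧ ∀ x, α x ≠ x)
    (htrans : ∀ x y : Fin 12,
      ∃ g ∈ Subgroup.closure ({σ, α} : Set (Equiv.Perm (Fin 12))), g x = y)
    (x y : Fin 12) (hxy : permOrbit (σ * α) x ≠ permOrbit (σ * α) y)
    (hx : (permOrbit (σ * α) x).ncard = s) (hy : (permOrbit (σ * α) y).ncard = 12 - s)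
    (hcov : ∀ z, z ∈ permOrbit (σ * α) x ∨ z ∈ permOrbit (σ * α) y) :
    ({s, 12 - s} : Finset ℕ) ∈
      ({{1, 11}, {4, 8}, {5, 7}, {3, 9}, {2, 10}} : Finset (Finset ℕ)) ∧ s ≠ 6 := by
  have hxmem : x ∈ permOrbit (σ * α) x := ⟨0, by simp⟩
  have hymem : y ∈ permOrbit (σ * α) y := ⟨0, by simp⟩
  have hs1 : 1 ≤ s := by
    have := (Set.ncard_pos (Set.toFinite _)).2 ⟨x, hxmem⟩
    omega
  have hs11 : s ≤ 11 := by
    have := (Set.ncard_pos (Set.toFinite _)).2 ⟨y, hymem⟩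
    omega
  have hs6 : s ≠ 6 := by
    intro h6
    apply no66 σ α hσ hα.1 hα.2 htrans
    intro z
    rcases hcov z with hz | hz
    · rw [← permOrbit_eq_of_mem hz, hx, h6]
    · rw [← permOrbit_eq_of_mem hz, hy, h6]
  refine ⟨?_, hs6⟩
  interval_cases s
  all_goals first
  | exact absurd rfl hs6
  | decide
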